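/- Let R₁, R₂ ∈ k(x)^{m×p} be rational matrices and R = R₁ + R₂. Then for every ℓ ≥ 0, the determinantal denominator φ_ℓ(R) divides φ_ℓ(R₁)·φ_ℓ(R₂). If moreover φ_1(R₁) and φ_1(R₂) are coprime in k[x], then φ_ℓ(R) = φ_ℓ(R₁)·φ_ℓ(R₂). -/

import Mathlib

open Polynomial

/-- The determinantal denominator `φ_ℓ(R)`: the monic least common denominator in `k[x]`
of all minors of the rational matrix `R` of size at most `ℓ` (with `φ_0(R) = 1`). -/
noncomputable def detDen {k : Type*} [Field k] [DecidableEq k] {m p : ℕ} (ℓ : ℕ)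
    (R : Matrix (Fin m) (Fin p) (RatFunc k)) : Polynomial k :=
  (Finset.univ : Finset (Σ s : Fin (ℓ + 1), (Fin (s : ℕ) → Fin m) × (Fin (s : ℕ) → Fin p))).lcm
    (fun t => ((R.submatrix t.2.1 t.2.2).det).denom)

open Matrix Finset Equiv


section DetDenAuxiliary
variable {A : Type*} [CommRing A] {n : ℕ}

/-- replace the rows of `M` in `s` by standard basis vectors `e_{g i}`. -/
def rep (M : Matrix (Fin n) (Fin n) A) (s : Finset (Fin n)) (g : Fin n → Fin n) :
    Matrix (Fin n) (Fin n) A :=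
  Matrix.of fun i j => if i ∈ s then (if j = g i then 1 else 0) else M i j

noncomputable def GG (s : Finset (Fin n)) : Finset (Fin n → Fin n) :=
  @Finset.filter _ (fun g => ∀ i ∉ s, g i = i) (Classical.decPred _) Finset.univ

lemma mem_GG {s : Finset (Fin n)} {g : Fin n → Fin n} :
    g ∈ GG s ↔ ∀ i ∉ s, g i = i := by simp [GG]

lemma stageA (M : Matrix (Fin n) (Fin n) A) (s : Finset (Fin n)) :
    M.det = ∑ g ∈ GG s, (∏ i ∈ s, M i (g i)) * (rep M s g).det := by
  classical
  have h0 : (M : Fin n → Fin n → A) =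
      fun i => ∑ j ∈ (if i ∈ s then (Finset.univ : Finset (Fin n)) else {i}),
        (if i ∈ s then M i j • (Pi.single j 1 : Fin n → A) else M i) := by
    funext i
    by_cases hi : i ∈ s
    · simp only [if_pos hi]
      have hsm : ∀ j, M i j • (Pi.single j 1 : Fin n → A) = Pi.single j (M i j) := by
        intro j; rw [← Pi.single_smul, smul_eq_mul, mul_one]
      simp only [hsm]
      exact (Finset.univ_sum_single (M i)).symm
    · simp [if_neg hi]
  have hGG : Fintype.piFinset (fun i => if i ∈ s then (Finset.univ : Finset (Fin n)) else {i})
      = GG s := by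
    ext r
    simp only [Fintype.mem_piFinset, mem_GG]
    constructor
    · intro h i hi
      have := h i
      rwa [if_neg hi, Finset.mem_singleton] at this
    · intro h i
      by_cases hi : i ∈ s
      · simp [hi]
      · simp [hi, h i hi]
  have hdet : M.det = ∑ r ∈ Fintype.piFinset
      (fun i => if i ∈ s then (Finset.univ : Finset (Fin n)) else {i}),
      Matrix.detRowAlternating (fun i => if i ∈ s then M i (r i) •
        (Pi.single (r i) 1 : Fin n → A) else M i) := by
    conv_lhs => rw [show M.det = Matrix.detRowAlternating M from rfl, h0]
    exact (Matrix.detRowAlternating :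
      AlternatingMap A (Fin n → A) A (Fin n)).toMultilinearMap.map_sum_finset _ _
  rw [hdet, hGG]
  refine Finset.sum_congr rfl (fun g hg => ?_)
  have hrow : (fun i => if i ∈ s then M i (g i) • (Pi.single (g i) 1 : Fin n → A) else M i)
      = s.piecewise (fun i => (if i ∈ s then M i (g i) else 1) • rep M s g i)
        (rep M s g) := by
    funext i j
    by_cases hi : i ∈ s
    · simp [Finset.piecewise_eq_of_mem _ _ _ hi, Finset.piecewise, hi, rep, Pi.single_apply, mul_comm]
    · simp [Finset.piecewise_eq_of_notMem _ _ _ hi, Finset.piecewise, hi, rep]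
  rw [hrow]
  have := MultilinearMap.map_piecewise_smul
    (Matrix.detRowAlternating :
      AlternatingMap A (Fin n → A) A (Fin n)).toMultilinearMap
    (fun i => if i ∈ s then M i (g i) else 1) (fun i => rep M s g i) s
  rw [show (Matrix.detRowAlternating (s.piecewise
      (fun i => (if i ∈ s then M i (g i) else 1) • rep M s g i) (rep M s g))) =
    (∏ i ∈ s, (if i ∈ s then M i (g i) else 1)) • Matrix.detRowAlternating (rep M s g)
    from this]
  rw [show (Matrix.detRowAlternating (rep M s g)) = (rep M s g).det from rfl]
  rw [Finset.prod_congr rfl (fun i hi => if_pos hi), smul_eq_mul]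
variable {A : Type*} [CommRing A] {n : ℕ}

def embF (s : Finset (Fin n)) : Fin s.card → Fin n := fun x => ↑(s.orderIsoOfFin rfl x)

lemma embF_mem (s : Finset (Fin n)) (x : Fin s.card) : embF s x ∈ s := Subtype.coe_prop _

lemma embF_strictMono (s : Finset (Fin n)) : StrictMono (embF s) := by
  have : embF s = ⇑(s.orderEmbOfFin rfl) := by
    funext x; exact Finset.coe_orderIsoOfFin_apply s rfl x
  rw [this]
  exact (s.orderEmbOfFin rfl).strictMono

lemma embF_surj (s : Finset (Fin n)) {i : Fin n} (hi : i ∈ s) : ∃ x, embF s x = i :=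
  ⟨(s.orderIsoOfFin rfl).symm ⟨i, hi⟩, by simp [embF]⟩

lemma embF_symm_apply (s : Finset (Fin n)) (x : Fin s.card) :
    (s.orderIsoOfFin rfl).symm ⟨embF s x, embF_mem s x⟩ = x := by
  rw [OrderIso.symm_apply_eq]
  exact Subtype.ext rfl

noncomputable def extP (s : Finset (Fin n)) (τ : Perm (Fin s.card)) : Perm (Fin n) :=
  τ.extendDomain (s.orderIsoOfFin rfl).toEquiv

lemma extP_emb (s : Finset (Fin n)) (τ : Perm (Fin s.card)) (x : Fin s.card) :
    extP s τ (embF s x) = embF s (τ x) := by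
  unfold extP
  rw [Equiv.Perm.extendDomain_apply_subtype _ _ (embF_mem s x)]
  rw [show ((s.orderIsoOfFin rfl).toEquiv.symm ⟨embF s x, embF_mem s x⟩ : Fin s.card)
      = x from embF_symm_apply s x]
  rfl

lemma extP_not_mem (s : Finset (Fin n)) (τ : Perm (Fin s.card)) {i : Fin n} (hi : i ∉ s) :
    extP s τ i = i :=
  Equiv.Perm.extendDomain_apply_not_subtype _ _ hi

lemma extP_mem (s : Finset (Fin n)) (τ : Perm (Fin s.card)) {i : Fin n} (hi : i ∈ s) :
    extP s τ i ∈ s := by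
  obtain ⟨x, rfl⟩ := embF_surj s hi
  rw [extP_emb]
  exact embF_mem s _

lemma sign_extP (s : Finset (Fin n)) (τ : Perm (Fin s.card)) :
    Equiv.Perm.sign (extP s τ) = Equiv.Perm.sign τ :=
  Equiv.Perm.sign_extendDomain τ _

lemma mono_unique {a : ℕ} {T : Finset (Fin n)} (hT : T.card = a) {f₁ f₂ : Fin a → Fin n}
    (h₁ : StrictMono f₁) (h₂ : StrictMono f₂) (m₁ : ∀ x, f₁ x ∈ T) (m₂ : ∀ x, f₂ x ∈ T) :
    f₁ = f₂ := by
  rw [Finset.orderEmbOfFin_unique hT m₁ h₁, Finset.orderEmbOfFin_unique hT m₂ h₂]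

open Classical in
noncomputable def monoOf (s : Finset (Fin n)) (g : Fin n → Fin n) : Fin n → Fin n :=
  if h : Set.InjOn g ↑s then
    (fun i => if hi : i ∈ s then
      ((s.image g).orderIsoOfFin
        (by rw [Finset.card_image_of_injOn h]) ((s.orderIsoOfFin rfl).symm ⟨i, hi⟩) : Fin n)
    else i)
  else g

open Classical in
noncomputable def permOf (s : Finset (Fin n)) (g : Fin n → Fin n) : Perm (Fin s.card) :=
  if h : Set.InjOn g ↑s then
    Equiv.ofBijective
      (fun x => ((s.image g).orderIsoOfFin (by rw [Finset.card_image_of_injOn h])).symm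
        ⟨g (embF s x), Finset.mem_image_of_mem g (embF_mem s x)⟩)
      (by
        rw [← Finite.injective_iff_bijective]
        intro x y hxy
        have h2 : g (embF s x) = g (embF s y) := by
          have := congrArg (fun z => (((s.image g).orderIsoOfFin
            (by rw [Finset.card_image_of_injOn h])) z : Fin n)) hxy
          simpa using this
        exact (embF_strictMono s).injective (h (embF_mem s x) (embF_mem s y) h2))
  else 1

lemma monoOf_not_mem (s : Finset (Fin n)) (g : Fin n → Fin n) (h : Set.InjOn g ↑s)
    {i : Fin n} (hi : i ∉ s) : monoOf s g i = i := by
  unfold monoOf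
  rw [dif_pos h, dif_neg hi]

lemma monoOf_emb (s : Finset (Fin n)) (g : Fin n → Fin n) (h : Set.InjOn g ↑s)
    (x : Fin s.card) :
    monoOf s g (embF s x) =
      ((s.image g).orderIsoOfFin (by rw [Finset.card_image_of_injOn h]) x : Fin n) := by
  unfold monoOf
  rw [dif_pos h, dif_pos (embF_mem s x), embF_symm_apply s x]

lemma monoOf_strictMonoOn (s : Finset (Fin n)) (g : Fin n → Fin n) (h : Set.InjOn g ↑s) :
    StrictMonoOn (monoOf s g) ↑s := by
  intro i hi j hj hij
  obtain ⟨x, rfl⟩ := embF_surj s (Finset.mem_coe.mp hi)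
  obtain ⟨y, rfl⟩ := embF_surj s (Finset.mem_coe.mp hj)
  rw [monoOf_emb s g h, monoOf_emb s g h]
  have hxy : x < y := by
    by_contra hc
    exact absurd (embF_strictMono s |>.le_iff_le.mpr (not_lt.mp hc)) (not_le.mpr hij)
  exact Subtype.coe_lt_coe.mpr (((s.image g).orderIsoOfFin _).strictMono hxy)
noncomputable def MonoF (s : Finset (Fin n)) : Finset (Fin n → Fin n) :=
  @Finset.filter _ (fun g => (∀ i ∉ s, g i = i) ∧ StrictMonoOn g ↑s)
    (Classical.decPred _) Finset.univ

lemma mem_MonoF {s : Finset (Fin n)} {g : Fin n → Fin n} :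
    g ∈ MonoF s ↔ (∀ i ∉ s, g i = i) ∧ StrictMonoOn g ↑s := by simp [MonoF]

/-- the recovery identity: `g = monoOf g ∘ extP (permOf g)` on all of `Fin n`,
for `g` identity off `s` and injective on `s`. -/
lemma monoOf_extP_permOf (s : Finset (Fin n)) (g : Fin n → Fin n)
    (hg : ∀ i ∉ s, g i = i) (h : Set.InjOn g ↑s) :
    (fun i => monoOf s g (extP s (permOf s g) i)) = g := by
  funext i
  by_cases hi : i ∈ s
  · obtain ⟨x, rfl⟩ := embF_surj s hi
    rw [extP_emb, monoOf_emb s g h]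
    have hperm : permOf s g x = ((s.image g).orderIsoOfFin
        (by rw [Finset.card_image_of_injOn h])).symm
        ⟨g (embF s x), Finset.mem_image_of_mem g (embF_mem s x)⟩ := by
      unfold permOf
      rw [dif_pos h]
      rfl
    rw [hperm]
    simp
  · rw [extP_not_mem s _ hi, monoOf_not_mem s g h hi, hg i hi]

lemma image_comp_extP (s : Finset (Fin n)) (g : Fin n → Fin n) (τ : Perm (Fin s.card)) :
    s.image (fun i => g (extP s τ i)) = s.image g := by
  ext j
  simp only [Finset.mem_image]
  constructor
  · rintro ⟨i, hi, rfl⟩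
    exact ⟨extP s τ i, extP_mem s τ hi, rfl⟩
  · rintro ⟨i, hi, rfl⟩
    obtain ⟨x, rfl⟩ := embF_surj s hi
    refine ⟨embF s (τ⁻¹ x), embF_mem s _, ?_⟩
    rw [extP_emb]
    simp
lemma coe_orderIso_strictMono (T : Finset (Fin n)) {a : ℕ} (hT : T.card = a) :
    StrictMono (fun x : Fin a => (T.orderIsoOfFin hT x : Fin n)) := by
  have : (fun x : Fin a => (T.orderIsoOfFin hT x : Fin n)) = ⇑(T.orderEmbOfFin hT) := by
    funext x; exact Finset.coe_orderIsoOfFin_apply T hT x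
  rw [this]; exact (T.orderEmbOfFin hT).strictMono

lemma embF_comp_strictMono (s : Finset (Fin n)) {g : Fin n → Fin n}
    (hm : StrictMonoOn g ↑s) : StrictMono (fun x => g (embF s x)) :=
  fun x y hxy => hm (embF_mem s x) (embF_mem s y) (embF_strictMono s hxy)

lemma coe_orderIso_image (s : Finset (Fin n)) {g : Fin n → Fin n}
    (hm : StrictMonoOn g ↑s) (T : Finset (Fin n)) (hT : T.card = s.card)
    (him : ∀ x, g (embF s x) ∈ T) :
    (fun x : Fin s.card => (T.orderIsoOfFin hT x : Fin n)) = fun x => g (embF s x) :=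
  mono_unique hT (coe_orderIso_strictMono T hT) (embF_comp_strictMono s hm)
    (fun x => (T.orderIsoOfFin hT x).coe_prop) him

lemma injOn_comp_extP (s : Finset (Fin n)) {g : Fin n → Fin n}
    (hm : Set.InjOn g ↑s) (τ : Perm (Fin s.card)) :
    Set.InjOn (fun i => g (extP s τ i)) ↑s := by
  intro i hi j hj heq
  have := hm (Finset.mem_coe.mpr (extP_mem s τ (Finset.mem_coe.mp hi)))
    (Finset.mem_coe.mpr (extP_mem s τ (Finset.mem_coe.mp hj))) heq
  exact (extP s τ).injective this

lemma monoOf_comp (s : Finset (Fin n)) (g : Fin n → Fin n)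
    (hg : ∀ i ∉ s, g i = i) (hm : StrictMonoOn g ↑s) (τ : Perm (Fin s.card)) :
    monoOf s (fun i => g (extP s τ i)) = g := by
  set g' := fun i => g (extP s τ i) with hg'
  have hinj' : Set.InjOn g' ↑s := injOn_comp_extP s hm.injOn τ
  have hcard : (s.image g').card = s.card := Finset.card_image_of_injOn hinj'
  have him : ∀ x, g (embF s x) ∈ s.image g' := by
    intro x
    rw [hg', image_comp_extP s g τ]
    exact Finset.mem_image_of_mem g (embF_mem s x)
  have key := coe_orderIso_image s hm (s.image g') hcard him
  funext i
  by_cases hi : i ∈ s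
  · obtain ⟨x, rfl⟩ := embF_surj s hi
    rw [monoOf_emb s g' hinj']
    exact congrFun key x
  · rw [monoOf_not_mem s g' hinj' hi, hg i hi]

lemma permOf_comp (s : Finset (Fin n)) (g : Fin n → Fin n)
    (hg : ∀ i ∉ s, g i = i) (hm : StrictMonoOn g ↑s) (τ : Perm (Fin s.card)) :
    permOf s (fun i => g (extP s τ i)) = τ := by
  set g' := fun i => g (extP s τ i) with hg'
  have hinj' : Set.InjOn g' ↑s := injOn_comp_extP s hm.injOn τ
  have hcard : (s.image g').card = s.card := Finset.card_image_of_injOn hinj'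
  have him : ∀ x, g (embF s x) ∈ s.image g' := by
    intro x
    rw [hg', image_comp_extP s g τ]
    exact Finset.mem_image_of_mem g (embF_mem s x)
  have key := coe_orderIso_image s hm (s.image g') hcard him
  ext x
  have h1 : permOf s g' x = ((s.image g').orderIsoOfFin hcard).symm
      ⟨g' (embF s x), Finset.mem_image_of_mem g' (embF_mem s x)⟩ := by
    unfold permOf
    rw [dif_pos hinj']
    rfl
  rw [h1]
  have h2 : g' (embF s x) = g (embF s (τ x)) := by
    show g (extP s τ (embF s x)) = _
    rw [extP_emb]
  have h3 : g (embF s (τ x)) = ((s.image g').orderIsoOfFin hcard (τ x) : Fin n) :=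
    (congrFun key (τ x)).symm
  have h4 : (⟨g' (embF s x), Finset.mem_image_of_mem g' (embF_mem s x)⟩ :
      {y // y ∈ s.image g'}) = (s.image g').orderIsoOfFin hcard (τ x) :=
    Subtype.ext (h2.trans h3)
  rw [h4, OrderIso.symm_apply_apply]
lemma rep_comp_extP (M : Matrix (Fin n) (Fin n) A) (s : Finset (Fin n))
    (g : Fin n → Fin n) (τ : Perm (Fin s.card)) :
    rep M s (fun i => g (extP s τ i)) = fun i => rep M s g (extP s τ i) := by
  funext i j
  by_cases hi : i ∈ s
  · simp [rep, hi, extP_mem s τ hi]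
  · simp [rep, hi, extP_not_mem s τ hi]

lemma det_rep_comp_extP (M : Matrix (Fin n) (Fin n) A) (s : Finset (Fin n))
    (g : Fin n → Fin n) (τ : Perm (Fin s.card)) :
    (rep M s (fun i => g (extP s τ i))).det =
      ((Equiv.Perm.sign τ : ℤ) : A) * (rep M s g).det := by
  rw [rep_comp_extP]
  rw [show Matrix.det (fun i => rep M s g (extP s τ i))
    = ((Equiv.Perm.sign (extP s τ) : ℤ) : A) * (rep M s g).det from
      Matrix.det_permute (extP s τ) (rep M s g)]
  rw [sign_extP]

lemma innerDet (M : Matrix (Fin n) (Fin n) A) (s : Finset (Fin n)) (g : Fin n → Fin n) :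
    ∑ τ : Perm (Fin s.card), ((Equiv.Perm.sign τ : ℤ) : A) *
        ∏ i ∈ s, M i (g (extP s τ i))
      = (M.submatrix (embF s) (fun y => g (embF s y))).det := by
  rw [← Matrix.det_transpose, Matrix.det_apply']
  refine Finset.sum_congr rfl (fun τ _ => ?_)
  congr 1
  rw [← Finset.prod_coe_sort]
  rw [← Equiv.prod_comp (s.orderIsoOfFin rfl).toEquiv
    (fun y : {x // x ∈ s} => M ↑y (g (extP s τ ↑y)))]
  refine Finset.prod_congr rfl (fun x _ => ?_)
  show M (embF s x) (g (extP s τ (embF s x))) = _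
  rw [extP_emb]
  simp [Matrix.submatrix_apply, Matrix.transpose_apply]

lemma stageB (M : Matrix (Fin n) (Fin n) A) (s : Finset (Fin n)) :
    M.det = ∑ g ∈ MonoF s,
      (M.submatrix (embF s) (fun y => g (embF s y))).det * (rep M s g).det := by
  classical
  rw [stageA M s]
  -- restrict to functions injective on s
  have hstep1 : ∑ g ∈ GG s, (∏ i ∈ s, M i (g i)) * (rep M s g).det
      = ∑ g ∈ (GG s).filter (fun g => Set.InjOn g ↑s),
        (∏ i ∈ s, M i (g i)) * (rep M s g).det := by
    refine (Finset.sum_filter_of_ne ?_).symm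
    intro g hg hne
    by_contra hinj
    apply hne
    have : (rep M s g).det = 0 := by
      rw [Set.InjOn] at hinj
      push_neg at hinj
      obtain ⟨i, hi, j, hj, hgij, hij⟩ := hinj
      refine Matrix.det_zero_of_row_eq hij ?_
      funext j'
      simp [rep, Finset.mem_coe.mp hi, Finset.mem_coe.mp hj, hgij]
    rw [this, mul_zero]
  rw [hstep1]
  -- reindex by (monotone rep, permutation)
  have hstep2 : ∑ g ∈ (GG s).filter (fun g => Set.InjOn g ↑s),
        (∏ i ∈ s, M i (g i)) * (rep M s g).det
      = ∑ p ∈ (MonoF s) ×ˢ (Finset.univ : Finset (Perm (Fin s.card))),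
        (∏ i ∈ s, M i (p.1 (extP s p.2 i))) * (rep M s (fun i => p.1 (extP s p.2 i))).det := by
    refine (Finset.sum_nbij' (i := fun p => fun i => p.1 (extP s p.2 i))
      (j := fun g => (monoOf s g, permOf s g)) ?_ ?_ ?_ ?_ ?_).symm
    · rintro ⟨g, τ⟩ hp
      obtain ⟨hg1, hg2⟩ := mem_MonoF.mp (Finset.mem_product.mp hp).1
      rw [Finset.mem_filter]
      constructor
      · rw [mem_GG]
        intro i hi
        show g (extP s τ i) = i
        rw [extP_not_mem s τ hi]
        exact hg1 i hi
      · exact injOn_comp_extP s hg2.injOn τ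
    · intro g hg
      rw [Finset.mem_filter] at hg
      obtain ⟨hgG, hinj⟩ := hg
      rw [Finset.mem_product]
      refine ⟨mem_MonoF.mpr ⟨?_, monoOf_strictMonoOn s g hinj⟩, Finset.mem_univ _⟩
      intro i hi
      exact monoOf_not_mem s g hinj hi
    · rintro ⟨g, τ⟩ hp
      obtain ⟨hg1, hg2⟩ := mem_MonoF.mp (Finset.mem_product.mp hp).1
      have e1 := monoOf_comp s g hg1 hg2 τ
      have e2 := permOf_comp s g hg1 hg2 τ
      simp only [e1, e2]
    · intro g hg
      rw [Finset.mem_filter] at hg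
      exact monoOf_extP_permOf s g (mem_GG.mp hg.1) hg.2
    · rintro ⟨g, τ⟩ hp
      rfl
  rw [hstep2, Finset.sum_product]
  refine Finset.sum_congr rfl (fun g hg => ?_)
  calc ∑ τ : Perm (Fin s.card), (∏ i ∈ s, M i (g (extP s τ i))) *
        (rep M s (fun i => g (extP s τ i))).det
      = ∑ τ : Perm (Fin s.card), (((Equiv.Perm.sign τ : ℤ) : A) *
          ∏ i ∈ s, M i (g (extP s τ i))) * (rep M s g).det := by
        refine Finset.sum_congr rfl (fun τ _ => ?_)
        rw [det_rep_comp_extP]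
        ring
    _ = (∑ τ : Perm (Fin s.card), ((Equiv.Perm.sign τ : ℤ) : A) *
          ∏ i ∈ s, M i (g (extP s τ i))) * (rep M s g).det := by
        rw [Finset.sum_mul]
    _ = (M.submatrix (embF s) (fun y => g (embF s y))).det * (rep M s g).det := by
        rw [innerDet]
end DetDenAuxiliary

section RatPart
variable {k : Type*} [Field k] [DecidableEq k]

lemma denom_sum {ι : Type*} (t : Finset ι) (f : ι → RatFunc k) {D : k[X]} (hD : D ≠ 0)
    (h : ∀ i ∈ t, (f i).denom ∣ D) : (∑ i ∈ t, f i).denom ∣ D := by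
  rw [RatFunc.denom_dvd hD]
  choose p hp using fun i (hi : i ∈ t) => (RatFunc.denom_dvd hD).mp (h i hi)
  refine ⟨∑ i ∈ t.attach, p i i.2, ?_⟩
  rw [map_sum, Finset.sum_div, ← Finset.sum_attach t f]
  exact Finset.sum_congr rfl (fun i _ => hp i i.2)

lemma denom_mul_dvd' {x y : RatFunc k} {Dx Dy : k[X]} (hx : x.denom ∣ Dx)
    (hy : y.denom ∣ Dy) : (x * y).denom ∣ Dx * Dy :=
  (RatFunc.denom_mul_dvd x y).trans (mul_dvd_mul hx hy)

lemma denom_algebraMap_dvd_one (q : k[X]) :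
    (algebraMap k[X] (RatFunc k) q).denom ∣ 1 := by
  rw [RatFunc.denom_dvd one_ne_zero]
  exact ⟨q, by rw [_root_.map_one, div_one]⟩

/-- all minors of size at most `ℓ` have denominator dividing `D` -/
def MBd (ℓ : ℕ) {m p : ℕ} (R : Matrix (Fin m) (Fin p) (RatFunc k)) (D : k[X]) : Prop :=
  ∀ j, j ≤ ℓ → ∀ (f : Fin j → Fin m) (g : Fin j → Fin p), ((R.submatrix f g).det).denom ∣ D

lemma detDen_ne_zero (ℓ : ℕ) {m p : ℕ} (R : Matrix (Fin m) (Fin p) (RatFunc k)) :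
    detDen ℓ R ≠ 0 := by
  intro h
  unfold detDen at h
  rw [Finset.lcm_eq_zero_iff] at h
  obtain ⟨t, -, ht⟩ := h
  exact RatFunc.denom_ne_zero _ ht

set_option maxHeartbeats 1000000 in
lemma mb_detDen (ℓ : ℕ) {m p : ℕ} (R : Matrix (Fin m) (Fin p) (RatFunc k)) :
    MBd ℓ R (detDen ℓ R) := by
  intro j hj f g
  unfold detDen
  apply Finset.dvd_lcm (b := (⟨⟨j, Nat.lt_succ_of_le hj⟩, (f, g)⟩ :
      Σ s : Fin (ℓ + 1), (Fin (s : ℕ) → Fin m) × (Fin (s : ℕ) → Fin p)))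
  exact Finset.mem_univ _

lemma detDen_dvd_of_mb {ℓ : ℕ} {m p : ℕ} {R : Matrix (Fin m) (Fin p) (RatFunc k)}
    {D : k[X]} (h : MBd ℓ R D) : detDen ℓ R ∣ D := by
  apply Finset.lcm_dvd
  rintro ⟨s, f, g⟩ -
  exact h s (Nat.lt_succ_iff.mp s.isLt) f g

lemma detDen_monic (ℓ : ℕ) {m p : ℕ} (R : Matrix (Fin m) (Fin p) (RatFunc k)) :
    (detDen ℓ R).Monic := by
  have h := detDen_ne_zero ℓ R
  have h2 : normalize (detDen ℓ R) = detDen ℓ R := Finset.normalize_lcm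
  rw [← h2]
  exact Polynomial.monic_normalize h

lemma mb_neg {ℓ : ℕ} {m p : ℕ} {R : Matrix (Fin m) (Fin p) (RatFunc k)} {D : k[X]}
    (h : MBd ℓ R D) : MBd ℓ (-R) D := by
  intro j hj f g
  have e : (-R).submatrix f g = -(R.submatrix f g) := by
    ext x y; simp
  rw [e, Matrix.det_neg]
  have h1 : ((-1 : RatFunc k) ^ Fintype.card (Fin j))
      = algebraMap k[X] (RatFunc k) ((-1 : k[X]) ^ Fintype.card (Fin j)) := by
    rw [map_pow, map_neg, _root_.map_one]
  rw [h1]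
  calc ((algebraMap k[X] (RatFunc k) ((-1 : k[X]) ^ Fintype.card (Fin j)) *
        (R.submatrix f g).det)).denom
      ∣ (algebraMap k[X] (RatFunc k) ((-1 : k[X]) ^ Fintype.card (Fin j))).denom *
        ((R.submatrix f g).det).denom := RatFunc.denom_mul_dvd _ _
    _ ∣ 1 * D := mul_dvd_mul (denom_algebraMap_dvd_one _) (h j hj f g)
    _ = D := one_mul D

set_option maxHeartbeats 1000000 in
set_option synthInstance.maxHeartbeats 400000 in
lemma mb_pow (ℓ : ℕ) {m p : ℕ} (R : Matrix (Fin m) (Fin p) (RatFunc k)) :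
    MBd ℓ R ((detDen 1 R) ^ ℓ) := by
  intro j hj f g
  set d := detDen 1 R with hd
  have hd0 : d ≠ 0 := detDen_ne_zero 1 R
  have hent : ∀ (i : Fin m) (j' : Fin p), (R i j').denom ∣ d := by
    intro i j'
    have := mb_detDen 1 R 1 le_rfl (fun _ => i) (fun _ => j')
    rwa [Matrix.det_fin_one, Matrix.submatrix_apply] at this
  choose P hP using fun (i : Fin m) (j' : Fin p) => (RatFunc.denom_dvd hd0).mp (hent i j')
  have hrew : R.submatrix f g = ((algebraMap k[X] (RatFunc k) d)⁻¹) •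
      (((Matrix.of fun x y => P (f x) (g y)) :
        Matrix (Fin j) (Fin j) k[X]).map (algebraMap k[X] (RatFunc k))) := by
    funext x y
    show R (f x) (g y) = _
    rw [hP (f x) (g y)]
    simp only [Matrix.smul_apply, Matrix.map_apply, Matrix.of_apply, smul_eq_mul]
    rw [div_eq_mul_inv, mul_comm]
  rw [hrew, Matrix.det_smul]
  have hmapdet : (((Matrix.of fun x y => P (f x) (g y)) :
      Matrix (Fin j) (Fin j) k[X]).map (algebraMap k[X] (RatFunc k))).det
      = algebraMap k[X] (RatFunc k) ((Matrix.of fun x y => P (f x) (g y)).det) := by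
    rw [(algebraMap k[X] (RatFunc k)).map_det]
    rfl
  rw [hmapdet]
  have h2 : (algebraMap k[X] (RatFunc k) d)⁻¹ ^ Fintype.card (Fin j) *
      algebraMap k[X] (RatFunc k) ((Matrix.of fun x y => P (f x) (g y)).det)
    = algebraMap k[X] (RatFunc k) ((Matrix.of fun x y => P (f x) (g y)).det) /
      algebraMap k[X] (RatFunc k) (d ^ j) := by
    rw [Fintype.card_fin, map_pow, div_eq_mul_inv, ← inv_pow, mul_comm]
  rw [h2]
  have h3 : ((algebraMap k[X] (RatFunc k) ((Matrix.of fun x y => P (f x) (g y)).det) /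
      algebraMap k[X] (RatFunc k) (d ^ j))).denom ∣ d ^ j :=
    (RatFunc.denom_dvd (pow_ne_zero j hd0)).mpr ⟨_, rfl⟩
  exact h3.trans (pow_dvd_pow d hj)

end RatPart

section Assemble
open Matrix Finset Equiv
variable {k : Type*} [Field k] [DecidableEq k]

lemma det_add_sum_piecewise {A : Type*} [CommRing A] {n : ℕ}
    (Am Bm : Matrix (Fin n) (Fin n) A) :
    (Am + Bm).det = ∑ t : Finset (Fin n), Matrix.det (t.piecewise Am Bm) := by
  classical
  exact (Matrix.detRowAlternating :
    AlternatingMap A (Fin n → A) A (Fin n)).toMultilinearMap.map_add_univ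
      (Am : Fin n → Fin n → A) (Bm : Fin n → Fin n → A)

lemma det_piecewise_denom_dvd {ℓ n : ℕ} (hn : n ≤ ℓ)
    (Am Bm : Matrix (Fin n) (Fin n) (RatFunc k)) (s : Finset (Fin n)) {DA DB : k[X]}
    (hDA : DA ≠ 0) (hDB : DB ≠ 0)
    (hA : ∀ j, j ≤ ℓ → ∀ (f g : Fin j → Fin n), ((Am.submatrix f g).det).denom ∣ DA)
    (hB : ∀ j, j ≤ ℓ → ∀ (f g : Fin j → Fin n), ((Bm.submatrix f g).det).denom ∣ DB) :
    (Matrix.det (s.piecewise Am Bm)).denom ∣ DA * DB := by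
  classical
  set M : Matrix (Fin n) (Fin n) (RatFunc k) := s.piecewise Am Bm with hM
  have hcard : s.card ≤ ℓ := le_trans (by simpa using Finset.card_le_univ s) hn
  have hcardc : sᶜ.card ≤ ℓ := le_trans (by simpa using Finset.card_le_univ sᶜ) hn
  rw [show Matrix.det (s.piecewise Am Bm) = M.det from rfl, stageB M s]
  apply denom_sum _ _ (mul_ne_zero hDA hDB)
  intro g hg
  apply denom_mul_dvd'
  · have e : M.submatrix (embF s) (fun y => g (embF s y))
        = Am.submatrix (embF s) (fun y => g (embF s y)) := by
      funext x y
      show M (embF s x) (g (embF s y)) = _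
      simp [hM, Matrix.submatrix_apply, Finset.piecewise, embF_mem s x,
        Finset.piecewise_eq_of_mem _ _ _ (embF_mem s x)]
    rw [e]
    exact hA s.card hcard _ _
  · rw [stageB (rep M s g) sᶜ]
    apply denom_sum _ _ hDB
    intro g' hg'
    have e : (rep M s g).submatrix (embF sᶜ) (fun y => g' (embF sᶜ y))
        = Bm.submatrix (embF sᶜ) (fun y => g' (embF sᶜ y)) := by
      funext x y
      have hx : embF sᶜ x ∈ sᶜ := embF_mem _ x
      have hx' : embF sᶜ x ∉ s := Finset.mem_compl.mp hx
      simp [rep, hM, Matrix.submatrix_apply, hx', Finset.piecewise,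
        Finset.piecewise_eq_of_notMem _ _ _ hx']
    have hrest : ((rep (rep M s g) sᶜ g').det).denom ∣ 1 := by
      have hmat : rep (rep M s g) sᶜ g'
          = ((Matrix.of fun i j => if i ∈ sᶜ then (if j = g' i then (1 : k[X]) else 0)
              else (if j = g i then 1 else 0)) :
            Matrix (Fin n) (Fin n) k[X]).map (algebraMap k[X] (RatFunc k)) := by
        funext i j
        by_cases hi : i ∈ sᶜ
        · have his : i ∉ s := Finset.mem_compl.mp hi
          simp [rep, hi, his, Matrix.map_apply, apply_ite (algebraMap k[X] (RatFunc k))]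
        · have his : i ∈ s := by simpa using hi
          simp [rep, hi, his, Matrix.map_apply, apply_ite (algebraMap k[X] (RatFunc k))]
      rw [hmat]
      have hmapdet : (((Matrix.of fun i j => if i ∈ sᶜ then (if j = g' i then (1 : k[X]) else 0)
              else (if j = g i then 1 else 0)) :
            Matrix (Fin n) (Fin n) k[X]).map (algebraMap k[X] (RatFunc k))).det
          = algebraMap k[X] (RatFunc k)
            ((Matrix.of fun i j => if i ∈ sᶜ then (if j = g' i then (1 : k[X]) else 0)
              else (if j = g i then 1 else 0)).det) := by
        rw [(algebraMap k[X] (RatFunc k)).map_det]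
        rfl
      rw [hmapdet]
      exact denom_algebraMap_dvd_one _
    have hBm : ((((rep M s g).submatrix (embF sᶜ) fun y => g' (embF sᶜ y))).det).denom ∣ DB := by
      rw [e]
      exact hB sᶜ.card hcardc _ _
    have := denom_mul_dvd' hBm hrest
    rwa [mul_one] at this

lemma mb_add {ℓ m p : ℕ} {R₁ R₂ : Matrix (Fin m) (Fin p) (RatFunc k)} {D₁ D₂ : k[X]}
    (hD₁ : D₁ ≠ 0) (hD₂ : D₂ ≠ 0) (h1 : MBd ℓ R₁ D₁) (h2 : MBd ℓ R₂ D₂) :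
    MBd ℓ (R₁ + R₂) (D₁ * D₂) := by
  intro j hj f g
  have e : (R₁ + R₂).submatrix f g = R₁.submatrix f g + R₂.submatrix f g := by
    funext x y
    simp [Matrix.submatrix_apply, Matrix.add_apply]
  rw [e, det_add_sum_piecewise]
  apply denom_sum _ _ (mul_ne_zero hD₁ hD₂)
  intro t _
  refine det_piecewise_denom_dvd hj _ _ t hD₁ hD₂ ?_ ?_
  · intro j' hj' f' g'
    rw [Matrix.submatrix_submatrix]
    exact h1 j' hj' _ _
  · intro j' hj' f' g'
    rw [Matrix.submatrix_submatrix]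
    exact h2 j' hj' _ _

end Assemble

/-- Determinantal denominators of a sum: φ_ℓ(R₁ + R₂) divides φ_ℓ(R₁)·φ_ℓ(R₂),
with equality when φ_1(R₁) and φ_1(R₂) are coprime. -/
theorem detDen_add (k : Type*) [Field k] [DecidableEq k] (m p : ℕ)
    (R₁ R₂ : Matrix (Fin m) (Fin p) (RatFunc k)) (ℓ : ℕ) :
    detDen ℓ (R₁ + R₂) ∣ detDen ℓ R₁ * detDen ℓ R₂ ∧
      (IsCoprime (detDen 1 R₁) (detDen 1 R₂) →
        detDen ℓ (R₁ + R₂) = detDen ℓ R₁ * detDen ℓ R₂) := by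
  have hne1 := detDen_ne_zero ℓ R₁
  have hne2 := detDen_ne_zero ℓ R₂
  have hdvd : detDen ℓ (R₁ + R₂) ∣ detDen ℓ R₁ * detDen ℓ R₂ :=
    detDen_dvd_of_mb (mb_add hne1 hne2 (mb_detDen ℓ R₁) (mb_detDen ℓ R₂))
  refine ⟨hdvd, fun cop => ?_⟩
  have copl : IsCoprime (detDen ℓ R₁) (detDen ℓ R₂) := by
    have hp : IsCoprime ((detDen 1 R₁) ^ ℓ) ((detDen 1 R₂) ^ ℓ) := cop.pow
    exact (hp.of_isCoprime_of_dvd_left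
      (detDen_dvd_of_mb (mb_pow ℓ R₁))).of_isCoprime_of_dvd_right
      (detDen_dvd_of_mb (mb_pow ℓ R₂))
  have h1 : detDen ℓ R₁ ∣ detDen ℓ (R₁ + R₂) := by
    have hmb : MBd ℓ ((R₁ + R₂) + (-R₂)) (detDen ℓ (R₁ + R₂) * detDen ℓ R₂) :=
      mb_add (detDen_ne_zero _ _) hne2 (mb_detDen ℓ (R₁ + R₂)) (mb_neg (mb_detDen ℓ R₂))
    rw [show (R₁ + R₂) + (-R₂) = R₁ by abel] at hmb
    exact copl.dvd_of_dvd_mul_right (detDen_dvd_of_mb hmb)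
  have h2 : detDen ℓ R₂ ∣ detDen ℓ (R₁ + R₂) := by
    have hmb : MBd ℓ ((R₁ + R₂) + (-R₁)) (detDen ℓ (R₁ + R₂) * detDen ℓ R₁) :=
      mb_add (detDen_ne_zero _ _) hne1 (mb_detDen ℓ (R₁ + R₂)) (mb_neg (mb_detDen ℓ R₁))
    rw [show (R₁ + R₂) + (-R₁) = R₂ by abel] at hmb
    exact copl.symm.dvd_of_dvd_mul_right (detDen_dvd_of_mb hmb)
  exact Polynomial.eq_of_monic_of_associated (detDen_monic _ _)
    ((detDen_monic ℓ R₁).mul (detDen_monic ℓ R₂))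
    (associated_of_dvd_dvd hdvd (copl.mul_dvd h1 h2))
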